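/- Let N ≥ 1 and let V = {0,…,N−1}² be the grid with its adjacency. Let S' and P' be disjoint subsets with S' ∪ P' = V. If some connected component of S' has bounding rectangle equal to all of V, then no connected component of P' has bounding rectangle equal to all of V. -/

import Mathlib

/-- The vertices of the `N × N` grid `{0,…,N−1}²`. -/
abbrev GridV (N : ℕ) : Type := Fin N × Fin N

/-- Grid adjacency: two vertices are adjacent when they differ by exactly `1` in exactly one
coordinate. -/
def Adj {N : ℕ} (u w : GridV N) : Prop :=
  (u.1 = w.1 ∧ ((u.2 : ℕ) + 1 = (w.2 : ℕ) ∨ (w.2 : ℕ) + 1 = (u.2 : ℕ))) ∨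
  (u.2 = w.2 ∧ ((u.1 : ℕ) + 1 = (w.1 : ℕ) ∨ (w.1 : ℕ) + 1 = (u.1 : ℕ)))

instance {N : ℕ} (u w : GridV N) : Decidable (Adj u w) := by unfold Adj; infer_instance

/-- Membership in the `c × c` square subgrid with bottom-left corner `(x0, y0)`. -/
def inSquare {N : ℕ} (x0 y0 c : ℕ) (v : GridV N) : Prop :=
  x0 ≤ (v.1 : ℕ) ∧ (v.1 : ℕ) < x0 + c ∧ y0 ≤ (v.2 : ℕ) ∧ (v.2 : ℕ) < y0 + c

instance {N : ℕ} (x0 y0 c : ℕ) (v : GridV N) : Decidable (inSquare x0 y0 c v) := by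
  unfold inSquare; infer_instance

/-- Super-tile capacity data on the `N × N` grid: functions `a b : V → ℕ` with equal totals
such that the sum of `a` (resp. `b`) over every `c × c` square subgrid is at most `ρ·c`.
(This encodes the flow graph of a super-tile: a source `s` with an arc of capacity `a v` into
each grid vertex `v`, arcs of capacity `ρ` in both directions between adjacent grid vertices,
and `b v` parallel unit-capacity arcs from each grid vertex `v` to a sink `p`.) -/
structure CapacityData (N ρ : ℕ) where
  a : GridV N → ℕ
  b : GridV N → ℕ
  total_eq : ∑ v, a v = ∑ v, b v
  a_square : ∀ c x0 y0 : ℕ, 1 ≤ c → x0 + c ≤ N → y0 + c ≤ N →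
    ∑ v ∈ Finset.univ.filter (inSquare x0 y0 c), a v ≤ ρ * c
  b_square : ∀ c x0 y0 : ℕ, 1 ≤ c → x0 + c ≤ N → y0 + c ≤ N →
    ∑ v ∈ Finset.univ.filter (inSquare x0 y0 c), b v ≤ ρ * c

/-- The total value `F = Σ_v a v (= Σ_v b v)` of capacity data. -/
def CapacityData.F {N ρ : ℕ} (d : CapacityData N ρ) : ℕ := ∑ v, d.a v

/-- `C` is a connected component of `X` (with respect to grid adjacency restricted to `X`):
`C` is the set of vertices reachable from some `v ∈ X` by paths staying inside `X`. -/
def IsComponent {N : ℕ} (X C : Finset (GridV N)) : Prop :=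
  ∃ v ∈ X, ∀ w : GridV N,
    w ∈ C ↔ Relation.ReflTransGen (fun p q => p ∈ X ∧ q ∈ X ∧ Adj p q) v w

/-- The bounding rectangle of `C` is all of the grid: `C` touches all four sides. -/
def FullBoundingRect {N : ℕ} (C : Finset (GridV N)) : Prop :=
  (∃ v ∈ C, (v.1 : ℕ) = 0) ∧ (∃ v ∈ C, (v.1 : ℕ) = N - 1) ∧
  (∃ v ∈ C, (v.2 : ℕ) = 0) ∧ (∃ v ∈ C, (v.2 : ℕ) = N - 1)

namespace GridJordan

abbrev Pt := ℤ × ℤ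

def AdjZ (p q : Pt) : Prop :=
  (p.1 = q.1 ∧ (p.2 + 1 = q.2 ∨ q.2 + 1 = p.2)) ∨
  (p.2 = q.2 ∧ (p.1 + 1 = q.1 ∨ q.1 + 1 = p.1))

def wsum (f : Pt × Pt → ZMod 2) (l : List Pt) : ZMod 2 := ((l.zip l.tail).map f).sum

def hxz (d : Pt) (s : Pt × Pt) : ZMod 2 :=
  if s.1.2 = s.2.2 ∧ s.1.2 ≤ d.2 ∧
      ((s.1.1 = d.1 ∧ s.2.1 = d.1 + 1) ∨ (s.2.1 = d.1 ∧ s.1.1 = d.1 + 1)) then 1 else 0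

def vxz (d : Pt) (s : Pt × Pt) : ZMod 2 :=
  if s.1.1 = s.2.1 ∧ s.1.1 ≤ d.1 ∧
      ((s.1.2 = d.2 ∧ s.2.2 = d.2 + 1) ∨ (s.2.2 = d.2 ∧ s.1.2 = d.2 + 1)) then 1 else 0

def hallz (a : ℤ) (s : Pt × Pt) : ZMod 2 :=
  if s.1.2 = s.2.2 ∧ ((s.1.1 = a ∧ s.2.1 = a + 1) ∨ (s.2.1 = a ∧ s.1.1 = a + 1)) then 1 else 0

def chi (d : Pt) (p : Pt) : ZMod 2 := if p.1 ≤ d.1 ∧ p.2 ≤ d.2 then 1 else 0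
def chix (a : ℤ) (p : Pt) : ZMod 2 := if p.1 ≤ a then 1 else 0

lemma wsum_cons (f : Pt × Pt → ZMod 2) (p q : Pt) (t : List Pt) :
    wsum f (p :: q :: t) = f (p, q) + wsum f (q :: t) := by
  simp [wsum]

/-- Telescoping: if the per-step indicator is a coboundary along adjacent steps,
its sum along a walk depends only on the endpoints. -/
lemma wsum_tele (f : Pt × Pt → ZMod 2) (g : Pt → ZMod 2)
    (h : ∀ p q : Pt, AdjZ p q → f (p, q) = g p + g q) :
    ∀ (l : List Pt) (hl : l.Chain' AdjZ) (hne : l ≠ []),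
      wsum f l = g (l.head hne) + g (l.getLast hne) := by
  intro l
  induction l with
  | nil => intro _ hne; exact absurd rfl hne
  | cons p t ih =>
    intro hl hne
    match t with
    | [] => simp [wsum, CharTwo.add_self_eq_zero]
    | q :: t' =>
      have hadj : AdjZ p q := (List.isChain_cons_cons.mp hl).1
      have htl : (q :: t').Chain' AdjZ := (List.isChain_cons_cons.mp hl).2
      rw [wsum_cons, h p q hadj, ih htl (by simp)]
      have : g q + (g q + g ((q :: t').getLast (by simp))) = g ((q :: t').getLast (by simp)) := by
        rw [← add_assoc, CharTwo.add_self_eq_zero, zero_add]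
      rw [List.head_cons, add_assoc, this]
      simp

lemma step_I1 (d : Pt) (p q : Pt) (hadj : AdjZ p q) :
    hxz d (p, q) + vxz d (p, q) = chi d p + chi d q := by
  rcases hadj with ⟨h1, h2⟩ | ⟨h1, h2⟩ <;>
  · simp only [hxz, vxz, chi]
    split_ifs <;> first | rfl | decide | (exfalso; omega)

lemma step_I2 (a : ℤ) (p q : Pt) (hadj : AdjZ p q) :
    hallz a (p, q) = chix a p + chix a q := by
  rcases hadj with ⟨h1, h2⟩ | ⟨h1, h2⟩ <;>
  · simp only [hallz, chix]
    split_ifs <;> first | rfl | decide | (exfalso; omega)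

lemma wsum_add (f g : Pt × Pt → ZMod 2) (l : List Pt) :
    wsum (fun s => f s + g s) l = wsum f l + wsum g l := by
  simp only [wsum]
  induction (l.zip l.tail) with
  | nil => simp
  | cons s t ih => simp [ih]; ring

/-- For a closed walk, the two ray-crossing parities agree. -/
lemma closed_hx_eq_vx (γ : List Pt) (hγ : γ.Chain' AdjZ) (hne : γ ≠ [])
    (hclosed : γ.head hne = γ.getLast hne) (d : Pt) :
    wsum (hxz d) γ = wsum (vxz d) γ := by
  have := wsum_tele (fun s => hxz d s + vxz d s) (chi d)
    (fun p q h => step_I1 d p q h) γ hγ hne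
  rw [wsum_add] at this
  rw [hclosed, CharTwo.add_self_eq_zero] at this
  have h2 : wsum (hxz d) γ + (wsum (hxz d) γ + wsum (vxz d) γ) = wsum (hxz d) γ + 0 := by
    rw [this]
  rw [← add_assoc, CharTwo.add_self_eq_zero, zero_add, add_zero] at h2
  exact h2.symm

lemma closed_hall (γ : List Pt) (hγ : γ.Chain' AdjZ) (hne : γ ≠ [])
    (hclosed : γ.head hne = γ.getLast hne) (a : ℤ) :
    wsum (hallz a) γ = 0 := by
  have := wsum_tele (hallz a) (chix a) (fun p q h => step_I2 a p q h) γ hγ hne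
  rwa [hclosed, CharTwo.add_self_eq_zero] at this

end GridJordan
namespace GridJordan

/-- Vertical descending segment from `(x,y)` to `(x, y-n)`. -/
def vd (x y : ℤ) : ℕ → List Pt
  | 0 => [(x, y)]
  | n + 1 => (x, y) :: vd x (y - 1) n

/-- Horizontal leftward segment from `(x,y)` to `(x-n, y)`. -/
def hl (x y : ℤ) : ℕ → List Pt
  | 0 => [(x, y)]
  | n + 1 => (x, y) :: hl (x - 1) y n

/-- Vertical ascending segment from `(x,y)` to `(x, y+n)`. -/
def vu (x y : ℤ) : ℕ → List Pt
  | 0 => [(x, y)]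
  | n + 1 => (x, y) :: vu x (y + 1) n

lemma vd_ne (x y : ℤ) (n : ℕ) : vd x y n ≠ [] := by cases n <;> simp [vd]
lemma hl_ne (x y : ℤ) (n : ℕ) : hl x y n ≠ [] := by cases n <;> simp [hl]
lemma vu_ne (x y : ℤ) (n : ℕ) : vu x y n ≠ [] := by cases n <;> simp [vu]

lemma vd_head (x y : ℤ) (n : ℕ) : (vd x y n).head (vd_ne x y n) = (x, y) := by
  cases n <;> simp [vd]
lemma hl_head (x y : ℤ) (n : ℕ) : (hl x y n).head (hl_ne x y n) = (x, y) := by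
  cases n <;> simp [hl]
lemma vu_head (x y : ℤ) (n : ℕ) : (vu x y n).head (vu_ne x y n) = (x, y) := by
  cases n <;> simp [vu]

lemma vd_last (x y : ℤ) (n : ℕ) : (vd x y n).getLast (vd_ne x y n) = (x, y - n) := by
  induction n generalizing y with
  | zero => simp [vd]
  | succ n ih =>
    have h0 : (vd x y (n+1)).getLast (vd_ne x y (n+1)) = (vd x (y-1) n).getLast (vd_ne x (y-1) n) :=
      List.getLast_cons (vd_ne x (y-1) n)
    rw [h0, ih (y-1)]; congr 1; push_cast; ring

lemma hl_last (x y : ℤ) (n : ℕ) : (hl x y n).getLast (hl_ne x y n) = (x - n, y) := by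
  induction n generalizing x with
  | zero => simp [hl]
  | succ n ih =>
    have h0 : (hl x y (n+1)).getLast (hl_ne x y (n+1)) = (hl (x-1) y n).getLast (hl_ne (x-1) y n) :=
      List.getLast_cons (hl_ne (x-1) y n)
    rw [h0, ih (x-1)]; congr 1; push_cast; ring

lemma vu_last (x y : ℤ) (n : ℕ) : (vu x y n).getLast (vu_ne x y n) = (x, y + n) := by
  induction n generalizing y with
  | zero => simp [vu]
  | succ n ih =>
    have h0 : (vu x y (n+1)).getLast (vu_ne x y (n+1)) = (vu x (y+1) n).getLast (vu_ne x (y+1) n) :=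
      List.getLast_cons (vu_ne x (y+1) n)
    rw [h0, ih (y+1)]; congr 1; push_cast; ring

lemma vd_chain (x y : ℤ) (n : ℕ) : (vd x y n).Chain' AdjZ := by
  induction n generalizing y with
  | zero => simp [vd, List.Chain']
  | succ n ih =>
    rw [vd, List.Chain', List.isChain_cons]
    refine ⟨?_, ih (y-1)⟩
    intro q hq
    rw [List.head?_eq_head (vd_ne x (y-1) n), vd_head] at hq
    cases hq
    exact Or.inl ⟨rfl, Or.inr (by ring)⟩

lemma hl_chain (x y : ℤ) (n : ℕ) : (hl x y n).Chain' AdjZ := by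
  induction n generalizing x with
  | zero => simp [hl, List.Chain']
  | succ n ih =>
    rw [hl, List.Chain', List.isChain_cons]
    refine ⟨?_, ih (x-1)⟩
    intro q hq
    rw [List.head?_eq_head (hl_ne (x-1) y n), hl_head] at hq
    cases hq
    exact Or.inr ⟨rfl, Or.inr (by ring)⟩

lemma vu_chain (x y : ℤ) (n : ℕ) : (vu x y n).Chain' AdjZ := by
  induction n generalizing y with
  | zero => simp [vu, List.Chain']
  | succ n ih =>
    rw [vu, List.Chain', List.isChain_cons]
    refine ⟨?_, ih (y+1)⟩
    intro q hq
    rw [List.head?_eq_head (vu_ne x (y+1) n), vu_head] at hq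
    cases hq
    exact Or.inl ⟨rfl, Or.inl rfl⟩

lemma vd_mem (x y : ℤ) (n : ℕ) (v : Pt) (hv : v ∈ vd x y n) :
    v.1 = x ∧ y - n ≤ v.2 ∧ v.2 ≤ y := by
  induction n generalizing y with
  | zero => simp [vd] at hv; subst hv; simp
  | succ n ih =>
    rw [show vd x y (n+1) = (x,y) :: vd x (y-1) n from rfl] at hv
    rcases List.mem_cons.mp hv with h | h
    · subst h; constructor <;> simp <;> omega
    · have := ih (y-1) h; push_cast at this ⊢; omega

lemma hl_mem (x y : ℤ) (n : ℕ) (v : Pt) (hv : v ∈ hl x y n) :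
    v.2 = y ∧ x - n ≤ v.1 ∧ v.1 ≤ x := by
  induction n generalizing x with
  | zero => simp [hl] at hv; subst hv; simp
  | succ n ih =>
    rw [show hl x y (n+1) = (x,y) :: hl (x-1) y n from rfl] at hv
    rcases List.mem_cons.mp hv with h | h
    · subst h; constructor <;> simp <;> omega
    · have := ih (x-1) h; push_cast at this ⊢; omega

lemma vu_mem (x y : ℤ) (n : ℕ) (v : Pt) (hv : v ∈ vu x y n) :
    v.1 = x ∧ y ≤ v.2 ∧ v.2 ≤ y + n := by
  induction n generalizing y with
  | zero => simp [vu] at hv; subst hv; simp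
  | succ n ih =>
    rw [show vu x y (n+1) = (x,y) :: vu x (y+1) n from rfl] at hv
    rcases List.mem_cons.mp hv with h | h
    · subst h; constructor <;> simp <;> omega
    · have := ih (y+1) h; push_cast at this ⊢; omega

lemma wsum_append (f : Pt × Pt → ZMod 2) (l1 l2 : List Pt) (h1 : l1 ≠ []) (h2 : l2 ≠ []) :
    wsum f (l1 ++ l2) = wsum f l1 + f (l1.getLast h1, l2.head h2) + wsum f l2 := by
  induction l1 with
  | nil => exact absurd rfl h1
  | cons p t ih =>
    match t with
    | [] =>
      match l2 with
      | q :: t2 => simp [wsum_cons, wsum]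
    | r :: t' =>
      have : (p :: r :: t') ++ l2 = p :: ((r :: t') ++ l2) := by simp
      rw [this]
      have hcons : (r :: t') ++ l2 = r :: (t' ++ l2) := by simp
      rw [hcons, wsum_cons, ← hcons, ih (by simp), wsum_cons]
      simp [List.getLast_cons]
      ring

end GridJordan
namespace GridJordan

lemma wsum_cons' (f : Pt × Pt → ZMod 2) (p : Pt) (l : List Pt) (h : l ≠ []) :
    wsum f (p :: l) = f (p, l.head h) + wsum f l := by
  match l with
  | q :: t => simp [wsum_cons]

lemma mem_of_step {l : List Pt} {s : Pt × Pt} (hs : s ∈ l.zip l.tail) :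
    s.1 ∈ l ∧ s.2 ∈ l := by
  obtain ⟨h1, h2⟩ := List.of_mem_zip (by rwa [← Prod.mk.eta (p := s)] at hs)
  exact ⟨h1, List.mem_of_mem_tail h2⟩

lemma wsum_congr (f g : Pt × Pt → ZMod 2) (l : List Pt)
    (h : ∀ s ∈ l.zip l.tail, f s = g s) : wsum f l = wsum g l := by
  simp only [wsum]
  rw [List.map_congr_left h]

lemma wsum_eq_zero (f : Pt × Pt → ZMod 2) (l : List Pt)
    (h : ∀ s ∈ l.zip l.tail, f s = 0) : wsum f l = 0 := by
  simp only [wsum]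
  apply List.sum_eq_zero
  intro x hx
  obtain ⟨s, hs, rfl⟩ := List.mem_map.mp hx
  exact h s hs

/-- crossing parity with a vertical segment list is zero -/
lemma wsum_hxz_const_x (d : Pt) (l : List Pt) (c : ℤ) (hc : ∀ v ∈ l, v.1 = c) :
    wsum (hxz d) l = 0 := by
  apply wsum_eq_zero
  intro s hs
  obtain ⟨h1, h2⟩ := mem_of_step hs
  have e1 := hc _ h1
  have e2 := hc _ h2
  simp only [hxz]
  rw [if_neg]
  omega

lemma wsum_hxz_hl (d : Pt) (y : ℤ) (n : ℕ) : ∀ x : ℤ,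
    wsum (hxz d) (hl x y n) = if y ≤ d.2 ∧ x - n ≤ d.1 ∧ d.1 + 1 ≤ x then 1 else 0 := by
  induction n with
  | zero =>
    intro x
    rw [if_neg (by push_cast; omega)]
    simp [hl, wsum]
  | succ n ih =>
    intro x
    rw [show hl x y (n+1) = (x, y) :: hl (x-1) y n from rfl,
      wsum_cons' _ _ _ (hl_ne _ _ _), hl_head, ih (x-1)]
    have hstep : hxz d ((x, y), (x - 1, y)) = if y ≤ d.2 ∧ d.1 = x - 1 then 1 else 0 := by
      simp only [hxz]
      apply if_congr _ rfl rfl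
      rw [true_and]
      omega
    rw [hstep]
    push_cast
    split_ifs <;> first | rfl | decide | (exfalso; omega)

/-- vertical-move invariance of the horizontal-crossing parity -/
lemma inv_v (γ : List Pt) (a b : ℤ) (h : ((a, b + 1) : Pt) ∉ γ) :
    wsum (hxz (a, b)) γ = wsum (hxz (a, b + 1)) γ := by
  apply wsum_congr
  intro s hs
  obtain ⟨h1, h2⟩ := mem_of_step hs
  have hp : s.1 ≠ (a, b + 1) := fun e => h (e ▸ h1)
  have hq : s.2 ≠ (a, b + 1) := fun e => h (e ▸ h2)
  rw [Ne, Prod.ext_iff] at hp hq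
  push_neg at hp hq
  simp only at hp hq
  simp only [hxz]
  apply if_congr _ rfl rfl
  constructor
  · rintro ⟨e1, e2, e3⟩; exact ⟨e1, by omega, e3⟩
  · rintro ⟨e1, e2, e3⟩
    refine ⟨e1, ?_, e3⟩
    rcases e3 with ⟨f1, f2⟩ | ⟨f1, f2⟩
    · have := hp f1; omega
    · have := hq f1; omega

/-- horizontal-move invariance of the vertical-crossing parity -/
lemma inv_h (γ : List Pt) (a b : ℤ) (h : ((a + 1, b) : Pt) ∉ γ) :
    wsum (vxz (a, b)) γ = wsum (vxz (a + 1, b)) γ := by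
  apply wsum_congr
  intro s hs
  obtain ⟨h1, h2⟩ := mem_of_step hs
  have hp : s.1 ≠ (a + 1, b) := fun e => h (e ▸ h1)
  have hq : s.2 ≠ (a + 1, b) := fun e => h (e ▸ h2)
  rw [Ne, Prod.ext_iff] at hp hq
  push_neg at hp hq
  simp only at hp hq
  simp only [vxz]
  apply if_congr _ rfl rfl
  constructor
  · rintro ⟨e1, e2, e3⟩
    refine ⟨e1, ?_, e3⟩
    by_contra hcon
    have hx : s.1.1 = a + 1 := by omega
    have hx2 : s.2.1 = a + 1 := by omega
    rcases e3 with ⟨f1, f2⟩ | ⟨f1, f2⟩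
    · have := hp hx; omega
    · have := hq hx2; omega
  · rintro ⟨e1, e2, e3⟩; exact ⟨e1, by omega, e3⟩

/-- The parity is constant on adjacent points avoiding the closed walk `γ`. -/
lemma delta_adj (γ : List Pt) (hγ : γ.Chain' AdjZ) (hne : γ ≠ [])
    (hclosed : γ.head hne = γ.getLast hne) (p q : Pt)
    (hp : p ∉ γ) (hq : q ∉ γ) (hadj : AdjZ p q) :
    wsum (hxz p) γ = wsum (hxz q) γ := by
  rcases hadj with ⟨h1, h2 | h2⟩ | ⟨h1, h2 | h2⟩
  · have e : q = ((p.1, p.2 + 1) : Pt) := Prod.ext_iff.mpr ⟨h1.symm, by omega⟩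
    rw [e]
    exact inv_v γ p.1 p.2 (by rw [← e]; exact hq)
  · have e : p = ((q.1, q.2 + 1) : Pt) := Prod.ext_iff.mpr ⟨h1, by omega⟩
    rw [e]
    exact (inv_v γ q.1 q.2 (by rw [← e]; exact hp)).symm
  · have e : q = ((p.1 + 1, p.2) : Pt) := Prod.ext_iff.mpr ⟨by omega, h1.symm⟩
    rw [closed_hx_eq_vx γ hγ hne hclosed, closed_hx_eq_vx γ hγ hne hclosed, e]
    exact inv_h γ p.1 p.2 (by rw [← e]; exact hq)
  · have e : p = ((q.1 + 1, q.2) : Pt) := Prod.ext_iff.mpr ⟨by omega, h1⟩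
    rw [closed_hx_eq_vx γ hγ hne hclosed, closed_hx_eq_vx γ hγ hne hclosed, e]
    exact (inv_h γ q.1 q.2 (by rw [← e]; exact hp)).symm

/-- constancy of a parity function along a walk -/
lemma chain_const (F : Pt → ZMod 2) (l : List Pt)
    (h : ∀ p q : Pt, p ∈ l → q ∈ l → AdjZ p q → F p = F q) :
    ∀ (hc : l.Chain' AdjZ) (hne : l ≠ []), F (l.head hne) = F (l.getLast hne) := by
  induction l with
  | nil => intro _ hne; exact absurd rfl hne
  | cons p t ih =>
    intro hc hne
    match t with
    | [] => simp
    | q :: t' =>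
      have hadj : AdjZ p q := (List.isChain_cons_cons.mp hc).1
      have htl : (q :: t').Chain' AdjZ := (List.isChain_cons_cons.mp hc).2
      have hstep := h p q (by simp) (by simp) hadj
      have := ih (fun a b ha hb => h a b (by simp [ha]) (by simp [hb])) htl (by simp)
      rw [List.head_cons] at this
      have e : (p :: q :: t').getLast hne = (q :: t').getLast (by simp) :=
        List.getLast_cons (by simp)
      rw [List.head_cons, e]
      exact hstep.trans this

end GridJordan
namespace GridJordan

theorem paths_cross (N : ℤ) (hN : 1 ≤ N) (Pl Ql : List Pt)
    (hPc : Pl.Chain' AdjZ) (hPne : Pl ≠ [])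
    (hPb : ∀ v ∈ Pl, 0 ≤ v.1 ∧ v.1 ≤ N - 1 ∧ 0 ≤ v.2 ∧ v.2 ≤ N - 1)
    (hP0 : (Pl.head hPne).1 = 0) (hPk : (Pl.getLast hPne).1 = N - 1)
    (hQc : Ql.Chain' AdjZ) (hQne : Ql ≠ [])
    (hQb : ∀ v ∈ Ql, 0 ≤ v.1 ∧ v.1 ≤ N - 1 ∧ 0 ≤ v.2 ∧ v.2 ≤ N - 1)
    (hQ0 : (Ql.head hQne).2 = 0) (hQk : (Ql.getLast hQne).2 = N - 1)
    (hdisj : ∀ q ∈ Ql, q ∉ Pl) : False := by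
  obtain ⟨hp0x0, hp0x1, hp0y0, hp0y1⟩ := hPb _ (List.head_mem hPne)
  obtain ⟨hpkx0, hpkx1, hpky0, hpky1⟩ := hPb _ (List.getLast_mem hPne)
  set p0 := Pl.head hPne with hp0def
  set pk := Pl.getLast hPne with hpkdef
  have ey0 : (p0.2.toNat : ℤ) = p0.2 := Int.toNat_of_nonneg hp0y0
  have eyk : (pk.2.toNat : ℤ) = pk.2 := Int.toNat_of_nonneg hpky0
  have eN : (N.toNat : ℤ) = N := Int.toNat_of_nonneg (by omega)
  set L1 : List Pt := vd N pk.2 (pk.2.toNat + 1) with hL1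
  set L2 : List Pt := hl (N - 1) (-1) N.toNat with hL2
  set L3 : List Pt := vu (-1) 0 p0.2.toNat with hL3
  set γ : List Pt := Pl ++ (L1 ++ (L2 ++ (L3 ++ [p0]))) with hγdef
  have hγne : γ ≠ [] := by simp [hγdef, hPne]
  -- head and last values of segments
  have hL1h : L1.head (vd_ne _ _ _) = (N, pk.2) := vd_head _ _ _
  have hL1l : L1.getLast (vd_ne _ _ _) = ((N : ℤ), -1) := by
    exact (vd_last _ _ _).trans (Prod.ext_iff.mpr ⟨rfl, by push_cast; omega⟩)
  have hL2h : L2.head (hl_ne _ _ _) = (N - 1, -1) := hl_head _ _ _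
  have hL2l : L2.getLast (hl_ne _ _ _) = ((-1 : ℤ), -1) := by
    exact (hl_last _ _ _).trans (Prod.ext_iff.mpr ⟨by push_cast; omega, rfl⟩)
  have hL3h : L3.head (vu_ne _ _ _) = (-1, 0) := vu_head _ _ _
  have hL3l : L3.getLast (vu_ne _ _ _) = ((-1 : ℤ), p0.2) := by
    exact (vu_last _ _ _).trans (Prod.ext_iff.mpr ⟨rfl, by push_cast; omega⟩)
  -- chain property of γ
  have hc3 : (L3 ++ [p0]).Chain' AdjZ := by
    rw [List.Chain', List.isChain_append]
    refine ⟨vu_chain _ _ _, by simp, ?_⟩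
    intro x hx y hy
    rw [List.getLast?_eq_getLast (vu_ne _ _ _), hL3l] at hx
    simp only [List.head?_cons, Option.mem_some_iff] at hx hy
    subst hx; subst hy
    exact Or.inr ⟨rfl, Or.inl (by omega)⟩
  have hc2 : (L2 ++ (L3 ++ [p0])).Chain' AdjZ := by
    rw [List.Chain', List.isChain_append]
    refine ⟨hl_chain _ _ _, hc3, ?_⟩
    intro x hx y hy
    rw [List.getLast?_eq_getLast (hl_ne _ _ _), hL2l] at hx
    rw [List.head?_eq_head (by simp), List.head_append_left (vu_ne _ _ _), hL3h] at hy
    simp only [Option.mem_some_iff] at hx hy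
    subst hx; subst hy
    exact Or.inl ⟨rfl, Or.inl (by omega)⟩
  have hc1 : (L1 ++ (L2 ++ (L3 ++ [p0]))).Chain' AdjZ := by
    rw [List.Chain', List.isChain_append]
    refine ⟨vd_chain _ _ _, hc2, ?_⟩
    intro x hx y hy
    rw [List.getLast?_eq_getLast (vd_ne _ _ _), hL1l] at hx
    rw [List.head?_eq_head (by simp), List.head_append_left (hl_ne _ _ _), hL2h] at hy
    simp only [Option.mem_some_iff] at hx hy
    subst hx; subst hy
    exact Or.inr ⟨rfl, Or.inr (by omega)⟩
  have hcγ : γ.Chain' AdjZ := by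
    rw [hγdef, List.Chain', List.isChain_append]
    refine ⟨hPc, hc1, ?_⟩
    intro x hx y hy
    rw [List.getLast?_eq_getLast hPne, ← hpkdef] at hx
    rw [List.head?_eq_head (by simp), List.head_append_left (vd_ne _ _ _), hL1h] at hy
    simp only [Option.mem_some_iff] at hx hy
    subst hx; subst hy
    exact Or.inr ⟨rfl, Or.inl (by omega)⟩
  have hγh : γ.head hγne = p0 := List.head_append_left hPne
  have hγl : γ.getLast hγne = p0 :=
    ((List.getLast_append_of_ne_nil _ (by simp)).trans
      ((List.getLast_append_of_ne_nil _ (by simp)).trans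
        ((List.getLast_append_of_ne_nil _ (by simp)).trans
          ((List.getLast_append_of_ne_nil _ (by simp)).trans (List.getLast_singleton _)))))
  have hclosed : γ.head hγne = γ.getLast hγne := by rw [hγh, hγl]
  -- structure of γ membership
  have hmemγ : ∀ v ∈ γ, v ∈ Pl ∨ v.1 = N ∨ v.2 = -1 ∨ v.1 = -1 := by
    intro v hv
    rw [hγdef] at hv
    simp only [List.mem_append, List.mem_cons, List.not_mem_nil, or_false] at hv
    rcases hv with h | h | h | h | h
    · exact Or.inl h
    · exact Or.inr (Or.inl (vd_mem _ _ _ _ h).1)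
    · exact Or.inr (Or.inr (Or.inl (hl_mem _ _ _ _ h).1))
    · exact Or.inr (Or.inr (Or.inr (vu_mem _ _ _ _ h).1))
    · subst h; exact Or.inl (List.head_mem hPne)
  have hybnd : ∀ v ∈ γ, v.2 ≤ N - 1 := by
    intro v hv
    rw [hγdef] at hv
    simp only [List.mem_append, List.mem_cons, List.not_mem_nil, or_false] at hv
    rcases hv with h | h | h | h | h
    · exact (hPb _ h).2.2.2
    · have := (vd_mem _ _ _ _ h).2.2; omega
    · have := (hl_mem _ _ _ _ h).1; omega
    · have := (vu_mem _ _ _ _ h).2.2; omega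
    · subst h; exact hp0y1
  have hQγ : ∀ q ∈ Ql, q ∉ γ := by
    intro q hq hmem
    obtain ⟨b1, b2, b3, b4⟩ := hQb _ hq
    rcases hmemγ _ hmem with h | h | h | h
    · exact hdisj _ hq h
    · omega
    · omega
    · omega
  -- the parity function
  set δ : Pt → ZMod 2 := fun z => wsum (hxz z) γ with hδ
  -- constancy along Q
  have hconst : δ (Ql.head hQne) = δ (Ql.getLast hQne) := by
    refine chain_const δ Ql ?_ hQc hQne
    intro p q hp hq hadj
    exact delta_adj γ hcγ hγne hclosed p q (hQγ p hp) (hQγ q hq) hadj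
  -- value at the top
  set qt := Ql.getLast hQne with hqtdef
  have htop : δ qt = 0 := by
    have hcg : wsum (hxz qt) γ = wsum (hallz qt.1) γ := by
      apply wsum_congr
      intro s hs
      obtain ⟨h1, h2⟩ := mem_of_step hs
      have b1 := hybnd _ h1
      simp only [hxz, hallz]
      apply if_congr _ rfl rfl
      constructor
      · rintro ⟨e1, e2, e3⟩; exact ⟨e1, e3⟩
      · rintro ⟨e1, e3⟩; exact ⟨e1, by omega, e3⟩
    rw [hδ]
    simp only
    rw [hcg, closed_hall γ hcγ hγne hclosed]
  -- value at the bottom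
  set qb := Ql.head hQne with hqbdef
  obtain ⟨hqbx0, hqbx1, hqby0, hqby1⟩ := hQb _ (List.head_mem hQne)
  rw [← hqbdef] at hqbx0 hqbx1 hqby0 hqby1
  have hqb2 : qb.2 = 0 := by rw [hqbdef]; exact hQ0
  have hqbPl : qb ∉ Pl := hdisj _ (List.head_mem hQne)
  have hbot : δ qb = 1 := by
    have wP : wsum (hxz qb) Pl = 0 := by
      apply wsum_eq_zero
      intro s hs
      obtain ⟨h1, h2⟩ := mem_of_step hs
      obtain ⟨c1, c2, c3, c4⟩ := hPb _ h1
      obtain ⟨d1, d2, d3, d4⟩ := hPb _ h2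
      simp only [hxz]
      rw [if_neg]
      rintro ⟨e1, e2, e3⟩
      rcases e3 with ⟨f1, f2⟩ | ⟨f1, f2⟩
      · exact hqbPl ((Prod.ext_iff.mpr ⟨f1, by omega⟩ : s.1 = qb) ▸ h1)
      · exact hqbPl ((Prod.ext_iff.mpr ⟨f1, by omega⟩ : s.2 = qb) ▸ h2)
    have j1 : hxz qb (pk, ((N : ℤ), pk.2)) = 0 := by
      simp only [hxz]
      rw [if_neg]
      rintro ⟨e1, e2, e3⟩
      rcases e3 with ⟨f1, f2⟩ | ⟨f1, f2⟩
      · exact hqbPl ((Prod.ext_iff.mpr ⟨f1, by omega⟩ : pk = qb) ▸ List.getLast_mem hPne)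
      · omega
    have w1 : wsum (hxz qb) L1 = 0 :=
      wsum_hxz_const_x _ _ N (fun v hv => (vd_mem _ _ _ _ hv).1)
    have j2 : hxz qb (((N : ℤ), -1), ((N - 1 : ℤ), -1)) = if qb.1 = N - 1 then 1 else 0 := by
      by_cases hc : qb.1 = N - 1
      · rw [if_pos hc]; simp only [hxz]; rw [if_pos]
        exact ⟨by trivial, by omega, Or.inr ⟨by omega, by omega⟩⟩
      · rw [if_neg hc]; simp only [hxz]; rw [if_neg]
        rintro ⟨e1, e2, e3⟩; omega
    have w2 : wsum (hxz qb) L2 = if qb.1 ≤ N - 2 then 1 else 0 := by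
      rw [hL2, wsum_hxz_hl]
      apply if_congr _ rfl rfl
      constructor
      · rintro ⟨e1, e2, e3⟩; omega
      · intro e; refine ⟨by omega, by omega, by omega⟩
    have j3 : hxz qb (((-1 : ℤ), -1), ((-1 : ℤ), 0)) = 0 := by
      simp only [hxz]
      rw [if_neg]
      rintro ⟨e1, e2, e3⟩
      omega
    have w3 : wsum (hxz qb) L3 = 0 :=
      wsum_hxz_const_x _ _ (-1) (fun v hv => (vu_mem _ _ _ _ hv).1)
    have j4 : hxz qb (((-1 : ℤ), p0.2), p0) = 0 := by
      simp only [hxz]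
      rw [if_neg]
      rintro ⟨e1, e2, e3⟩
      omega
    have w0 : wsum (hxz qb) [p0] = 0 := by simp [wsum]
    have a3 : wsum (hxz qb) (L3 ++ [p0]) = 0 := by
      rw [wsum_append _ _ _ (vu_ne _ _ _) (by simp), hL3l, w3, w0, List.head_cons, j4]
      decide
    have a2 : wsum (hxz qb) (L2 ++ (L3 ++ [p0])) = if qb.1 ≤ N - 2 then 1 else 0 := by
      rw [wsum_append _ _ _ (hl_ne _ _ _) (by simp), hL2l,
        List.head_append_left (vu_ne _ _ _), hL3h, w2, j3, a3]
      ring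
    have a1 : wsum (hxz qb) (L1 ++ (L2 ++ (L3 ++ [p0]))) =
        (if qb.1 = N - 1 then 1 else 0) + (if qb.1 ≤ N - 2 then 1 else 0) := by
      rw [wsum_append _ _ _ (vd_ne _ _ _) (by simp), hL1l,
        List.head_append_left (hl_ne _ _ _), hL2h, w1, j2, a2]
      ring
    have atotal : δ qb = 0 + hxz qb (pk, ((N : ℤ), pk.2)) +
        ((if qb.1 = N - 1 then 1 else 0) + (if qb.1 ≤ N - 2 then 1 else 0)) := by
      rw [hδ]
      simp only
      rw [hγdef, wsum_append _ _ _ hPne (by simp), ← hpkdef,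
        List.head_append_left (vd_ne _ _ _), hL1h, wP, a1]
    rw [atotal, j1]
    split_ifs <;> first | decide | (exfalso; omega)
  rw [hbot, htop] at hconst
  exact absurd hconst (by decide)

end GridJordan
namespace GridJordan

lemma rtg_list {α : Type*} {r : α → α → Prop} {Px : α → Prop} (hr : ∀ p q, r p q → Px q) :
    ∀ {a b : α}, Relation.ReflTransGen r a b → Px a →
    ∃ L : List α, L ≠ [] ∧ L.Chain' r ∧ L.head? = some a ∧ L.getLast? = some b ∧
      ∀ x ∈ L, Px x := by
  intro a b h
  induction h using Relation.ReflTransGen.head_induction_on with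
  | refl =>
    intro hb
    exact ⟨[b], by simp, List.isChain_singleton _, by simp, by simp, by simpa⟩
  | head hac hcb ih =>
    rename_i a' c
    intro ha
    obtain ⟨L, hne, hch, hh, hl, hmem⟩ := ih (hr _ _ hac)
    refine ⟨a' :: L, by simp, ?_, by simp, ?_, ?_⟩
    · rw [List.Chain', List.isChain_cons]
      refine ⟨?_, hch⟩
      intro y hy
      rw [hh] at hy
      cases hy
      exact hac
    · match L, hne with
      | x :: t, _ => rw [List.getLast?_cons_cons]; exact hl
    · intro x hx
      rcases List.mem_cons.mp hx with h | h
      · subst h; exact ha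
      · exact hmem _ h

end GridJordan

section Glue
open GridJordan

variable {N : ℕ}

/-- Embedding of the grid into `ℤ × ℤ`. -/
def embZ (u : GridV N) : Pt := ((u.1 : ℤ), (u.2 : ℤ))

lemma embZ_adj {u w : GridV N} (h : Adj u w) : AdjZ (embZ u) (embZ w) := by
  rcases h with ⟨h1, h2⟩ | ⟨h1, h2⟩
  · refine Or.inl ⟨?_, ?_⟩
    · simp [embZ, Fin.val_eq_val, h1]
    · rcases h2 with h | h
      · exact Or.inl (by simp only [embZ]; exact_mod_cast h)
      · exact Or.inr (by simp only [embZ]; exact_mod_cast h)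
  · refine Or.inr ⟨?_, ?_⟩
    · simp [embZ, Fin.val_eq_val, h1]
    · rcases h2 with h | h
      · exact Or.inl (by simp only [embZ]; exact_mod_cast h)
      · exact Or.inr (by simp only [embZ]; exact_mod_cast h)

lemma embZ_inj {u w : GridV N} (h : embZ u = embZ w) : u = w := by
  simp only [embZ, Prod.ext_iff] at h
  obtain ⟨h1, h2⟩ := h
  refine Prod.ext ?_ ?_ <;> [skip; skip] <;>
    · apply Fin.ext; omega

lemma adj_symm' {u w : GridV N} (h : Adj u w) : Adj w u := by
  rcases h with ⟨h1, h2⟩ | ⟨h1, h2⟩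
  · exact Or.inl ⟨h1.symm, h2.symm⟩
  · exact Or.inr ⟨h1.symm, h2.symm⟩

/-- Extraction: from a component touching two prescribed sides, get an embedded walk. -/
lemma extract_walk (X Cc : Finset (GridV N)) (hC : IsComponent X Cc)
    {e0 e1 : GridV N} (h0 : e0 ∈ Cc) (h1 : e1 ∈ Cc) :
    ∃ L : List (GridV N), L ≠ [] ∧
      L.Chain' (fun p q => Adj p q) ∧ L.head? = some e0 ∧ L.getLast? = some e1 ∧
      ∀ x ∈ L, x ∈ X := by
  obtain ⟨v, hv, hviff⟩ := hC
  set r : GridV N → GridV N → Prop := fun p q => p ∈ X ∧ q ∈ X ∧ Adj p q with hr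
  have hrsymm : Symmetric r := by
    rintro p q ⟨a, b, c⟩; exact ⟨b, a, adj_symm' c⟩
  have hw : Relation.ReflTransGen r e0 e1 :=
    (((@Relation.ReflTransGen.stdSymm _ r ⟨fun _ _ h => hrsymm h⟩).symm _ _ ((hviff e0).mp h0)).trans ((hviff e1).mp h1))
  have he0X : e0 ∈ X := by
    rcases (Relation.ReflTransGen.cases_tail ((hviff e0).mp h0)) with h | ⟨y, -, hy⟩
    · rw [h]; exact hv
    · exact hy.2.1
  obtain ⟨L, hne, hch, hh, hl, hmem⟩ :=
    rtg_list (Px := fun x => x ∈ X) (fun p q hpq => hpq.2.1) hw he0X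
  exact ⟨L, hne, List.IsChain.imp (fun a b hab => hab.2.2) hch, hh, hl, hmem⟩

end Glue

/-- Let `S'` and `P'` be disjoint subsets of the grid with union the whole grid. If some
connected component of `S'` has bounding rectangle equal to the whole grid, then no connected
component of `P'` has bounding rectangle equal to the whole grid. -/
theorem full_component_unique_side {N : ℕ} (hN : 1 ≤ N) (S' P' : Finset (GridV N))
    (hdisj : Disjoint S' P') (huniv : S' ∪ P' = Finset.univ)
    (C : Finset (GridV N)) (hC : IsComponent S' C) (hfull : FullBoundingRect C) :
    ∀ D : Finset (GridV N), IsComponent P' D → ¬ FullBoundingRect D := by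
  intro D hD hDfull
  classical
  obtain ⟨⟨vL, hvL, hvL0⟩, ⟨vR, hvR, hvR1⟩, -, -⟩ := hfull
  obtain ⟨-, -, ⟨wB, hwB, hwB0⟩, ⟨wT, hwT, hwT1⟩⟩ := hDfull
  obtain ⟨LS, hSne, hSch, hSh, hSl, hSmem⟩ := extract_walk S' C hC hvL hvR
  obtain ⟨LQ, hQne, hQch, hQh, hQl, hQmem⟩ := extract_walk P' D hD hwB hwT
  set Pl : List GridJordan.Pt := LS.map embZ with hPl
  set Ql : List GridJordan.Pt := LQ.map embZ with hQl'
  have hPlne : Pl ≠ [] := by simp [hPl, hSne]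
  have hQlne : Ql ≠ [] := by simp [hQl', hQne]
  have hPlh : Pl.head hPlne = embZ vL := by
    rw [← Option.some_inj, ← List.head?_eq_head]
    simp [hPl, hSh]
  have hPll : Pl.getLast hPlne = embZ vR := by
    rw [← Option.some_inj, ← List.getLast?_eq_getLast hPlne]
    simp [hPl, hSl]
  have hQlh : Ql.head hQlne = embZ wB := by
    rw [← Option.some_inj, ← List.head?_eq_head]
    simp [hQl', hQh]
  have hQll : Ql.getLast hQlne = embZ wT := by
    rw [← Option.some_inj, ← List.getLast?_eq_getLast hQlne]
    simp [hQl', hQl]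
  refine GridJordan.paths_cross (N : ℤ) (by exact_mod_cast hN) Pl Ql ?_ hPlne ?_ ?_ ?_
    ?_ hQlne ?_ ?_ ?_ ?_
  · rw [hPl, List.Chain', List.isChain_map]
    exact List.IsChain.imp (fun a b hab => embZ_adj hab) hSch
  · intro v hv
    obtain ⟨u, hu, rfl⟩ := List.mem_map.mp hv
    have h1 := u.1.isLt
    have h2 := u.2.isLt
    simp only [embZ]
    refine ⟨by omega, by omega, by omega, by omega⟩
  · rw [hPlh]; simp only [embZ]; omega
  · rw [hPll]; simp only [embZ]; omega
  · rw [hQl', List.Chain', List.isChain_map]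
    exact List.IsChain.imp (fun a b hab => embZ_adj hab) hQch
  · intro v hv
    obtain ⟨u, hu, rfl⟩ := List.mem_map.mp hv
    have h1 := u.1.isLt
    have h2 := u.2.isLt
    simp only [embZ]
    refine ⟨by omega, by omega, by omega, by omega⟩
  · rw [hQlh]; simp only [embZ]; omega
  · rw [hQll]; simp only [embZ]; omega
  · intro q hq hqP
    obtain ⟨uq, huq, rfl⟩ := List.mem_map.mp hq
    obtain ⟨up, hup, hupq⟩ := List.mem_map.mp hqP
    have := embZ_inj hupq
    subst this
    exact (Finset.disjoint_left.mp hdisj (hSmem _ hup)) (hQmem _ huq)
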